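/- Let e ≥ 2 and 0 < a < b ≤ e, and let B be the block of e-weight 3 with notation ⟨3^a, 4^{b−a}, 3^{e−b}⟩ (i.e., b_i = 3 for 0 ≤ i < a, b_i = 4 for a ≤ i < b, and b_i = 3 for b ≤ i < e), which forms a [3:1]-pair via the residue j carried by runner a. The partitions lying in B that are exceptional for this pair are exactly: ⟨a_{(2,1)}⟩; ⟨a_{(1,1)}, i_{(1)}⟩ for a < i < e; ⟨i_{(1)}, a_{(1,1)}⟩ for 0 ≤ i ≤ a − 2; and ⟨a_{(1,1,1)}⟩. -/

import Mathlib

/-- A partition: a weakly decreasing function `parts : ℕ → ℕ` (0-indexed),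
having exactly `len` nonzero parts. -/
structure AbacusPartition where
  parts : ℕ → ℕ
  antitone : Antitone parts
  len : ℕ
  pos_of_lt : ∀ i, i < len → 0 < parts i
  zero_of_ge : ∀ i, len ≤ i → parts i = 0

/-- The beta-set (abacus display) of a partition with `r` beads:
positions `λ_i + r - i` for `1 ≤ i ≤ r` (0-indexed: `parts i + (r - 1 - i)`). -/
def AbacusPartition.betaSet (lam : AbacusPartition) (r : ℕ) : Finset ℕ :=
  (Finset.range r).image (fun i => lam.parts i + (r - 1 - i))

/-- e-weight of the bead at position `p` of the display `B`: the number of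
unoccupied positions `q < p` with `q ≡ p (mod e)`. -/
def beadWeight (e : ℕ) (B : Finset ℕ) (p : ℕ) : ℕ :=
  ((Finset.range p).filter (fun q => q % e = p % e ∧ q ∉ B)).card

/-- Total e-weight of the display `B`. -/
def abacusWeight (e : ℕ) (B : Finset ℕ) : ℕ :=
  B.sum (fun p => beadWeight e B p)

/-- e-weight of a partition (computed from the display with `lam.len` beads). -/
def eWeight (e : ℕ) (lam : AbacusPartition) : ℕ :=
  abacusWeight e (lam.betaSet lam.len)

/-- Positions on runner `res` (positions `p` with `p % e = res`), in increasing
order, up to a bound strictly beyond every bead. -/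
def posList (e : ℕ) (B : Finset ℕ) (res : ℕ) : List ℕ :=
  (List.range (B.sup id + e + 2)).filter (fun p => p % e == res)

/-- One step of the signature-reduction automaton; the state is
`(list of surviving '+' positions, stack of pending '−' positions)`.
A '−' occurs at `p` when `p` is occupied and its preceding position unoccupied
(position `-1` counts as occupied); a '+' occurs at `p` when `p` is unoccupied
and its preceding position occupied.  A '+' cancels the most recent pending '−'. -/
def signStep (B : Finset ℕ) (st : List ℕ × List ℕ) (p : ℕ) : List ℕ × List ℕ :=
  if p ∈ B ∧ ¬(p = 0 ∨ p - 1 ∈ B) then (st.1, p :: st.2)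
  else if p ∉ B ∧ (p = 0 ∨ p - 1 ∈ B) then
    (match st.2 with
     | [] => (p :: st.1, ([] : List ℕ))
     | _ :: tl => (st.1, tl))
  else st

/-- Final state of the reduction of the `j`-signature on runner `res`:
`(surviving '+' (conormal) positions, surviving '−' (normal) positions)`,
each list in decreasing order of position. -/
def signState (e : ℕ) (B : Finset ℕ) (res : ℕ) : List ℕ × List ℕ :=
  (posList e B res).foldl (signStep B) ([], [])

/-- Positions of the normal beads on runner `res`, in decreasing order. -/
def normalList (e : ℕ) (B : Finset ℕ) (res : ℕ) : List ℕ := (signState e B res).2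

/-- The conormal positions on runner `res`, in decreasing order. -/
def conormalList (e : ℕ) (B : Finset ℕ) (res : ℕ) : List ℕ := (signState e B res).1

/-- ε: the number of normal beads on runner `res`. -/
def epsB (e : ℕ) (B : Finset ℕ) (res : ℕ) : ℕ := (normalList e B res).length

/-- φ: the number of conormal positions on runner `res`. -/
def phiB (e : ℕ) (B : Finset ℕ) (res : ℕ) : ℕ := (conormalList e B res).length

/-- ε_j of a partition: in the display with `lam.len` beads, residue `j`
is carried by runner `(j + lam.len) % e`. -/
def epsP (e : ℕ) (lam : AbacusPartition) (j : ℕ) : ℕ :=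
  epsB e (lam.betaSet lam.len) ((j + lam.len) % e)

/-- φ_j of a partition. -/
def phiP (e : ℕ) (lam : AbacusPartition) (j : ℕ) : ℕ :=
  phiB e (lam.betaSet lam.len) ((j + lam.len) % e)

/-- Move each bead in `ps` from its position `p` to `p - 1`. -/
def moveDown (B : Finset ℕ) (ps : List ℕ) : Finset ℕ :=
  ps.foldl (fun C p => insert (p - 1) (C.erase p)) B

/-- For each position `p` in `ps`, move the bead at `p - 1` to `p`. -/
def moveUp (B : Finset ℕ) (ps : List ℕ) : Finset ℕ :=
  ps.foldl (fun C p => insert p (C.erase (p - 1))) B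

/-- Ẽ^t on displays: move the `t` normal beads at the smallest positions down. -/
def Etil (e : ℕ) (B : Finset ℕ) (res t : ℕ) : Finset ℕ :=
  moveDown B ((normalList e B res).reverse.take t)

/-- F̃^t on displays: for the `t` largest conormal positions `p`,
move the bead at `p - 1` to `p`. -/
def Ftil (e : ℕ) (B : Finset ℕ) (res t : ℕ) : Finset ℕ :=
  moveUp B ((conormalList e B res).take t)

/-- Number of beads of `B` on runner `i`. -/
def runnerCount (e : ℕ) (B : Finset ℕ) (i : ℕ) : ℕ :=
  (B.filter (fun p => p % e = i)).card

/-- Sum of the e-weights of the beads of `B` on runner `i` (this is `|λ(i)|`). -/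
def runnerWeight (e : ℕ) (B : Finset ℕ) (i : ℕ) : ℕ :=
  (B.filter (fun p => p % e = i)).sum (beadWeight e B)

/-- The display of the e-core: slide every bead as far up its runner as possible. -/
def coreBeta (e : ℕ) (B : Finset ℕ) : Finset ℕ :=
  (Finset.range e).biUnion
    (fun i => (Finset.range (runnerCount e B i)).image (fun m => i + m * e))

/-- `lam` lies in the block with bead counts `bd 0, …, bd (e-1)` and e-weight `w`:
displayed with `r = bd 0 + ⋯ + bd (e-1)` beads it has `bd i` beads on runner `i`
and e-weight `w`. -/
def inBlock (e : ℕ) (bd : ℕ → ℕ) (w : ℕ) (lam : AbacusPartition) : Prop :=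
  lam.len ≤ (Finset.range e).sum bd ∧
  (∀ i < e, runnerCount e (lam.betaSet ((Finset.range e).sum bd)) i = bd i) ∧
  abacusWeight e (lam.betaSet ((Finset.range e).sum bd)) = w

/-- The single-runner beta-set of the partition with parts `ρ` and `c` beads. -/
def oneRunnerBeta (rho : List ℕ) (c : ℕ) : Finset ℕ :=
  (Finset.range c).image (fun t => rho.getD t 0 + (c - 1 - t))

/-- The display of the partition `⟨0_{lamOf 0}, …, (e−1)_{lamOf (e−1)} | bd 0, …, bd (e−1)⟩`. -/
def display (e : ℕ) (bd : ℕ → ℕ) (lamOf : ℕ → List ℕ) : Finset ℕ :=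
  (Finset.range e).biUnion
    (fun i => (oneRunnerBeta (lamOf i) (bd i)).image (fun m => i + m * e))

/-- The operator Ḟ at runner `res`: apply F̃^{φ} (valid when ε = 0 < φ). -/
def dotF (e : ℕ) (B : Finset ℕ) (res : ℕ) : Finset ℕ := Ftil e B res (phiB e B res)

/-- Apply a chain of Ḟ steps. -/
def chainFold (e : ℕ) : Finset ℕ → List ℕ → Finset ℕ
  | B, [] => B
  | B, i :: rest => chainFold e (dotF e B i) rest

/-- The chain of Ḟ steps is semisimple: at each step ε = 0 before, φ > 0 before,
and φ = 0 afterwards. -/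
def validChain (e : ℕ) : Finset ℕ → List ℕ → Prop
  | _, [] => True
  | B, i :: rest =>
      (epsB e B i = 0 ∧ 0 < phiB e B i ∧ phiB e (dotF e B i) i = 0) ∧
      validChain e (dotF e B i) rest

/-- `B` induces semisimply to `C` (displays with the same number of beads). -/
def InducesSS (e : ℕ) (B C : Finset ℕ) : Prop :=
  ∃ L : List ℕ, validChain e B L ∧ chainFold e B L = C

/-- Re-display a beta-set with `s` additional beads. -/
def shiftBeta (B : Finset ℕ) (s : ℕ) : Finset ℕ :=
  B.image (· + s) ∪ Finset.range s

/-- `B` induces semisimply to the partition displayed by `C` (where `C` may use a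
different number of beads). -/
def InducesToPartition (e : ℕ) (B C : Finset ℕ) : Prop :=
  ∃ D : Finset ℕ, InducesSS e B D ∧ shiftBeta D C.card = shiftBeta C D.card

/-- The block with bead counts `bd` and weight `w` is Rouquier:
for all `i < j < e`, `bd i − bd j ≥ w` or `bd j − bd i ≥ w − 1`. -/
def IsRouquier (e w : ℕ) (bd : ℕ → ℕ) : Prop :=
  ∀ i j, i < j → j < e → bd j + w ≤ bd i ∨ bd i + (w - 1) ≤ bd j

/-- `lam` is e-singular: it has `e` consecutive equal nonzero parts. -/
def ESingular (e : ℕ) (lam : AbacusPartition) : Prop :=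
  ∃ i, lam.parts i ≠ 0 ∧ ∀ m < e, lam.parts (i + m) = lam.parts i

/-- `lam` is e-regular. -/
def ERegular (e : ℕ) (lam : AbacusPartition) : Prop := ¬ ESingular e lam

/-- The induced e-sequence of the display `B`, as a multiset: each bead of
positive weight `w` at position `p` contributes `p, p−e, …, p−(w−1)e`. -/
def inducedSeq (e : ℕ) (B : Finset ℕ) : Multiset ℕ :=
  B.val.bind (fun p => (Multiset.range (beadWeight e B p)).map (fun m => p - m * e))

/-- The product order: `lam ≤_P mu` iff they have the same e-core and e-weight and
`s(mu)_r ≥ s(lam)_r` componentwise for all sufficiently large `r`. -/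
def ProdLE (e : ℕ) (lam mu : AbacusPartition) : Prop :=
  (∃ r, lam.len ≤ r ∧ mu.len ≤ r ∧
    coreBeta e (lam.betaSet r) = coreBeta e (mu.betaSet r)) ∧
  eWeight e lam = eWeight e mu ∧
  ∃ r0, ∀ r, r0 ≤ r →
    List.Forall₂ (· ≤ ·) ((inducedSeq e (lam.betaSet r)).sort (· ≤ ·))
      ((inducedSeq e (mu.betaSet r)).sort (· ≤ ·))


section Stmt7Aux

variable {e : ℕ} {B : Finset ℕ}

/-- Rows occupied on runner `i`. -/
def rowsOf (e : ℕ) (B : Finset ℕ) (i : ℕ) : Finset ℕ :=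
  (B.filter (fun p => p % e = i)).image (· / e)

/-- Weight of a one-runner row set. -/
def rowWt (M : Finset ℕ) : ℕ := M.sum (fun m => m - (M ∩ Finset.range m).card)

lemma self_eq_runner_pos {i p : ℕ} (hi : i < e) (hp : p % e = i) : i + p / e * e = p := by
  have h1 : e * (p / e) + p % e = p := Nat.div_add_mod p e
  rw [mul_comm]; omega

lemma runner_pos_mod {i m : ℕ} (hi : i < e) : (i + m * e) % e = i := by
  rw [Nat.add_mul_mod_self_right, Nat.mod_eq_of_lt hi]

lemma runner_pos_div {i m : ℕ} (hi : i < e) : (i + m * e) / e = m := by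
  have he : 0 < e := lt_of_le_of_lt (Nat.zero_le i) hi
  rw [Nat.add_mul_div_right _ _ he, Nat.div_eq_of_lt hi, Nat.zero_add]

lemma mem_rowsOf {i m : ℕ} (hi : i < e) : m ∈ rowsOf e B i ↔ i + m * e ∈ B := by
  constructor
  · intro hm
    simp only [rowsOf, Finset.mem_image, Finset.mem_filter] at hm
    obtain ⟨p, ⟨hpB, hpm⟩, rfl⟩ := hm
    rwa [self_eq_runner_pos hi hpm]
  · intro h
    simp only [rowsOf, Finset.mem_image, Finset.mem_filter]
    exact ⟨i + m * e, ⟨h, runner_pos_mod hi⟩, runner_pos_div hi⟩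

lemma runner_inj {i : ℕ} (he : 0 < e) : Function.Injective (fun m => i + m * e) := by
  intro x y hxy
  exact Nat.eq_of_mul_eq_mul_right he (Nat.add_left_cancel hxy)

lemma runnerCount_eq {i : ℕ} (hi : i < e) : runnerCount e B i = (rowsOf e B i).card := by
  unfold runnerCount rowsOf
  rw [Finset.card_image_of_injOn]
  intro p hp q hq hpq
  simp only [Finset.mem_filter, Finset.mem_coe] at hp hq
  have hpq' : p / e = q / e := hpq
  rw [← self_eq_runner_pos hi hp.2, ← self_eq_runner_pos hi hq.2, hpq']

lemma sct_bridge {i : ℕ} (hi : i < e) (n : ℕ) :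
    ((Finset.range n).filter (fun m => i + m * e ∈ B)).card = (rowsOf e B i ∩ Finset.range n).card := by
  congr 1
  ext m
  simp only [Finset.mem_filter, Finset.mem_inter, Finset.mem_range, mem_rowsOf hi]
  tauto

lemma beadWeight_eq {i : ℕ} (hi : i < e) (m : ℕ) :
    beadWeight e B (i + m * e) = m - (rowsOf e B i ∩ Finset.range m).card := by
  have he : 0 < e := lt_of_le_of_lt (Nat.zero_le i) hi
  have hkey : (Finset.range (i + m * e)).filter (fun q => q % e = (i + m * e) % e ∧ q ∉ B)
      = ((Finset.range m).filter (fun k => i + k * e ∉ B)).image (fun k => i + k * e) := by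
    ext q
    simp only [Finset.mem_filter, Finset.mem_image, Finset.mem_range, runner_pos_mod hi]
    constructor
    · rintro ⟨hq, hqi, hqB⟩
      refine ⟨q / e, ⟨?_, ?_⟩, self_eq_runner_pos hi hqi⟩
      · have h1 : q / e * e < m * e := by
          have := self_eq_runner_pos hi hqi; omega
        exact lt_of_mul_lt_mul_right h1 (Nat.zero_le e)
      · rwa [self_eq_runner_pos hi hqi]
    · rintro ⟨k, ⟨hk, hkB⟩, rfl⟩
      exact ⟨by have : k * e < m * e := (Nat.mul_lt_mul_right he).mpr hk; omega,
        runner_pos_mod hi, hkB⟩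
  unfold beadWeight
  rw [hkey, Finset.card_image_of_injective _ (runner_inj he)]
  have h2 := Finset.card_filter_add_card_filter_not (s := Finset.range m)
    (p := fun k => i + k * e ∈ B)
  rw [Finset.card_range] at h2
  have h3 := sct_bridge (B := B) hi m
  have h4 : ((Finset.range m).filter (fun k => ¬ (i + k * e ∈ B))).card
      = ((Finset.range m).filter (fun k => i + k * e ∉ B)).card := rfl
  omega

lemma runnerWeight_eq {i : ℕ} (hi : i < e) : runnerWeight e B i = rowWt (rowsOf e B i) := by
  have hinj : ∀ x ∈ B.filter (fun p => p % e = i), ∀ y ∈ B.filter (fun p => p % e = i),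
      x / e = y / e → x = y := by
    intro p hp q hq hpq
    simp only [Finset.mem_filter] at hp hq
    rw [← self_eq_runner_pos hi hp.2, ← self_eq_runner_pos hi hq.2, hpq]
  have h := Finset.sum_image (s := B.filter (fun p => p % e = i)) (g := fun p => p / e)
    (f := fun m => m - (rowsOf e B i ∩ Finset.range m).card) hinj
  have hrows : rowsOf e B i = (B.filter (fun p => p % e = i)).image (fun p => p / e) := rfl
  have hwt : rowWt (rowsOf e B i)
      = ∑ m ∈ (B.filter (fun p => p % e = i)).image (fun p => p / e),
        (m - (rowsOf e B i ∩ Finset.range m).card) := by rw [rowWt, ← hrows]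
  rw [hwt, h]
  unfold runnerWeight
  apply Finset.sum_congr rfl
  intro p hp
  simp only [Finset.mem_filter] at hp
  conv_lhs => rw [← self_eq_runner_pos hi hp.2]
  rw [beadWeight_eq hi]

lemma abacusWeight_eq (he : 0 < e) :
    abacusWeight e B = ∑ i ∈ Finset.range e, runnerWeight e B i := by
  unfold abacusWeight runnerWeight
  exact (Finset.sum_fiberwise_of_maps_to (fun p _ => Finset.mem_range.mpr (Nat.mod_lt p he))
    (fun p => beadWeight e B p)).symm

lemma rowWt_lt_bound {M : Finset ℕ} {x : ℕ} (hx : x ∈ M) : x < rowWt M + M.card := by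
  have h1 : (M ∩ Finset.range x).card ≤ x := by
    calc (M ∩ Finset.range x).card ≤ (Finset.range x).card :=
      Finset.card_le_card Finset.inter_subset_right
    _ = x := Finset.card_range x
  have h2 : x - (M ∩ Finset.range x).card ≤ rowWt M := by
    have := Finset.single_le_sum (s := M) (f := fun m => m - (M ∩ Finset.range m).card)
      (fun i _ => Nat.zero_le _) hx
    rw [rowWt]; exact this
  have h3 : (M ∩ Finset.range x).card < M.card := by
    apply Finset.card_lt_card
    constructor
    · exact Finset.inter_subset_left
    · intro hsub
      have := hsub hx
      simp only [Finset.mem_inter, Finset.mem_range] at this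
      omega
  omega

end Stmt7Aux

lemma mem_display {bd : ℕ → ℕ} {lamOf : ℕ → List ℕ} {p : ℕ} (he : 0 < e) :
    p ∈ display e bd lamOf ↔ p / e ∈ oneRunnerBeta (lamOf (p % e)) (bd (p % e)) := by
  unfold display
  simp only [Finset.mem_biUnion, Finset.mem_image, Finset.mem_range]
  constructor
  · rintro ⟨i, hi, m, hm, rfl⟩
    rwa [runner_pos_mod hi, runner_pos_div hi]
  · intro h
    exact ⟨p % e, Nat.mod_lt p he, p / e, h, self_eq_runner_pos (Nat.mod_lt p he) rfl⟩

lemma rowsOf_display {bd : ℕ → ℕ} {lamOf : ℕ → List ℕ} {i : ℕ} (hi : i < e) :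
    rowsOf e (display e bd lamOf) i = oneRunnerBeta (lamOf i) (bd i) := by
  have he : 0 < e := lt_of_le_of_lt (Nat.zero_le i) hi
  ext m
  rw [mem_rowsOf hi, mem_display he, runner_pos_mod hi, runner_pos_div hi]

lemma eq_display_of_rows {bd : ℕ → ℕ} {lamOf : ℕ → List ℕ} (he : 0 < e)
    (h : ∀ i < e, rowsOf e B i = oneRunnerBeta (lamOf i) (bd i)) :
    B = display e bd lamOf := by
  ext p
  rw [mem_display he, ← h (p % e) (Nat.mod_lt p he), mem_rowsOf (Nat.mod_lt p he),
    self_eq_runner_pos (Nat.mod_lt p he) rfl]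

/-- number of beads of `B` on runner `i` among rows `< n`. -/
def sctN (e : ℕ) (B : Finset ℕ) (i n : ℕ) : ℕ :=
  ((Finset.range n).filter (fun m => i + m * e ∈ B)).card

/-- running maximum of `tct - sct`. -/
def PN (e : ℕ) (B : Finset ℕ) (a n : ℕ) : ℕ :=
  (Finset.range (n + 1)).sup (fun m => sctN e B (a - 1) m - sctN e B a m)

lemma sctN_succ (i n : ℕ) :
    sctN e B i (n + 1) = sctN e B i n + (if i + n * e ∈ B then 1 else 0) := by
  unfold sctN
  rw [Finset.range_add_one, Finset.filter_insert]
  split_ifs with h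
  · rw [Finset.card_insert_of_notMem (by simp)]
  · omega

lemma PN_succ (a n : ℕ) :
    PN e B a (n + 1)
      = max (sctN e B (a - 1) (n + 1) - sctN e B a (n + 1)) (PN e B a n) := by
  unfold PN
  rw [Finset.range_add_one, Finset.sup_insert]

lemma PN_ge (a : ℕ) {m n : ℕ} (h : m ≤ n) :
    sctN e B (a - 1) m - sctN e B a m ≤ PN e B a n := by
  unfold PN
  exact Finset.le_sup (f := fun m => sctN e B (a - 1) m - sctN e B a m)
    (Finset.mem_range.mpr (by omega))

lemma fold_main {a : ℕ} (ha : 1 ≤ a) (n : ℕ) :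
    (((List.range n).map (fun m => a + m * e)).foldl (signStep B) ([], [])).1.length
        = PN e B a n ∧
    (((List.range n).map (fun m => a + m * e)).foldl (signStep B) ([], [])).2.length
        + sctN e B (a - 1) n = PN e B a n + sctN e B a n := by
  induction n with
  | zero =>
    simp only [List.range_zero, List.map_nil, List.foldl_nil, List.length_nil]
    unfold PN sctN
    simp
  | succ n ih =>
    rw [List.range_succ, List.map_append, List.foldl_append] at *
    set st := ((List.range n).map (fun m => a + m * e)).foldl (signStep B) ([], []) with hst
    obtain ⟨pl, ml⟩ := st
    simp only [List.map_cons, List.map_nil, List.foldl_cons, List.foldl_nil]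
    obtain ⟨ih1, ih2⟩ := ih
    have ih1' : pl.length = PN e B a n := ih1
    have ih2' : ml.length + sctN e B (a - 1) n = PN e B a n + sctN e B a n := ih2
    have hterm := PN_ge (e := e) (B := B) a (le_refl n)
    have hp0 : a + n * e ≠ 0 := by omega
    have hp1 : a + n * e - 1 = (a - 1) + n * e := by omega
    by_cases hS : a + n * e ∈ B <;> by_cases hT : (a - 1) + n * e ∈ B
    · have hstep : signStep B (pl, ml) (a + n * e) = (pl, ml) := by
        unfold signStep
        rw [if_neg (by rw [hp1]; tauto), if_neg (by tauto)]
      rw [hstep, PN_succ, sctN_succ, sctN_succ, if_pos hS, if_pos hT]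
      constructor <;> omega
    · have hstep : signStep B (pl, ml) (a + n * e) = (pl, (a + n * e) :: ml) := by
        unfold signStep
        rw [if_pos ⟨hS, by rw [hp1]; tauto⟩]
      rw [hstep, PN_succ, sctN_succ, sctN_succ, if_pos hS, if_neg hT]
      simp only [List.length_cons]
      constructor <;> omega
    · have hcond1 : ¬ (a + n * e ∈ B ∧ ¬(a + n * e = 0 ∨ a + n * e - 1 ∈ B)) := by tauto
      have hcond2 : a + n * e ∉ B ∧ (a + n * e = 0 ∨ a + n * e - 1 ∈ B) := by
        rw [hp1]; tauto
      cases ml with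
      | nil =>
        have hstep : signStep B (pl, []) (a + n * e) = ((a + n * e) :: pl, []) := by
          unfold signStep
          rw [if_neg hcond1, if_pos hcond2]
        rw [hstep, PN_succ, sctN_succ, sctN_succ, if_neg hS, if_pos hT]
        simp only [List.length_cons, List.length_nil] at *
        constructor <;> omega
      | cons hd tl =>
        have hstep : signStep B (pl, hd :: tl) (a + n * e) = (pl, tl) := by
          unfold signStep
          rw [if_neg hcond1, if_pos hcond2]
        rw [hstep, PN_succ, sctN_succ, sctN_succ, if_neg hS, if_pos hT]
        simp only [List.length_cons] at *
        constructor <;> omega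
    · have hstep : signStep B (pl, ml) (a + n * e) = (pl, ml) := by
        unfold signStep
        rw [if_neg (by tauto), if_neg (by rw [hp1]; tauto)]
      rw [hstep, PN_succ, sctN_succ, sctN_succ, if_neg hS, if_neg hT]
      constructor <;> omega

lemma signStep_inert {p : ℕ} (st : List ℕ × List ℕ) (h1 : p ∉ B) (h2 : p ≠ 0)
    (h3 : p - 1 ∉ B) : signStep B st p = st := by
  unfold signStep
  rw [if_neg (by tauto), if_neg (by tauto)]

lemma foldl_inert (l : List ℕ) (st : List ℕ × List ℕ)
    (h : ∀ p ∈ l, B.sup id + 2 ≤ p) : l.foldl (signStep B) st = st := by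
  induction l generalizing st with
  | nil => rfl
  | cons hd tl ih =>
    have hhd := h hd (List.mem_cons_self (a := hd) (l := tl))
    have h1 : hd ∉ B := fun hmem => by have := Finset.le_sup (f := id) hmem; simp at this; omega
    have h3 : hd - 1 ∉ B := fun hmem => by
      have := Finset.le_sup (f := id) hmem; simp at this; omega
    rw [List.foldl_cons, signStep_inert st h1 (by omega) h3]
    exact ih st (fun p hp => h p (List.mem_cons_of_mem hd hp))

lemma count_range_eq_one {a n : ℕ} (h : a < n) : (List.range n).count a = 1 :=
  List.count_eq_one_of_mem (List.nodup_range (n := n)) (List.mem_range.mpr h)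

lemma filter_beq_range {a n : ℕ} (h : a < n) :
    (List.range n).filter (fun j => j == a) = [a] := by
  have := List.filter_beq (l := List.range n) a
  rw [count_range_eq_one h] at this
  simpa using this

lemma filter_range_mul {a : ℕ} (hae : a < e) (q : ℕ) :
    (List.range (q * e)).filter (fun p => p % e == a)
      = (List.range q).map (fun m => a + m * e) := by
  induction q with
  | zero => simp
  | succ q ih =>
    rw [Nat.succ_mul, List.range_add, List.filter_append, ih, List.range_succ,
      List.map_append]
    congr 1
    rw [List.filter_map]
    have hcong : ∀ j ∈ List.range e,
        ((fun p => p % e == a) ∘ (fun j => q * e + j)) j = (fun j => j == a) j := by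
      intro j hj
      simp only [Function.comp_apply]
      rw [Nat.add_comm, Nat.add_mul_mod_self_right, Nat.mod_eq_of_lt (List.mem_range.mp hj)]
    rw [List.filter_congr hcong, filter_beq_range hae]
    simp [Nat.add_comm]

lemma signState_eq_foldmap (he2 : 2 ≤ e) {a : ℕ} (ha1 : 1 ≤ a) (hae : a < e) (q : ℕ)
    (hq : B.sup id + e + 2 ≤ q) :
    signState e B a
      = ((List.range q).map (fun m => a + m * e)).foldl (signStep B) ([], []) := by
  have he : 0 < e := by omega
  have hn0q : B.sup id + e + 2 ≤ q * e := by
    have : q * 1 ≤ q * e := Nat.mul_le_mul_left q (by omega)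
    omega
  have key : (List.filter (fun p => p % e == a) (List.range (q * e))).foldl (signStep B) ([], [])
      = (List.filter (fun p => p % e == a)
          (List.range (B.sup id + e + 2))).foldl (signStep B) ([], []) := by
    conv_lhs => rw [show q * e = (B.sup id + e + 2) + (q * e - (B.sup id + e + 2)) from by omega,
      List.range_add]
    rw [List.filter_append, List.foldl_append]
    apply foldl_inert
    intro p hp
    simp only [List.mem_filter, List.mem_map, List.mem_range] at hp
    obtain ⟨⟨j, hj, rfl⟩, _⟩ := hp
    omega
  unfold signState posList
  rw [← filter_range_mul hae q, key]

lemma eps_char (he2 : 2 ≤ e) {a : ℕ} (ha1 : 1 ≤ a) (hae : a < e)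
    (hS4 : (rowsOf e B a).card = 4) (hT3 : (rowsOf e B (a - 1)).card = 3)
    (hSsub : rowsOf e B a ⊆ Finset.range 7) (hTsub : rowsOf e B (a - 1) ⊆ Finset.range 7) :
    2 ≤ epsB e B a ↔ ∃ m < 8,
      (rowsOf e B a ∩ Finset.range m).card < (rowsOf e B (a - 1) ∩ Finset.range m).card := by
  have hea : a < e := hae
  have hea1 : a - 1 < e := by omega
  set q := B.sup id + e + 8 with hqdef
  have hq : B.sup id + e + 2 ≤ q := by omega
  have hq8 : 8 ≤ q := by omega
  have hbridge : ∀ i, i < e → ∀ n, sctN e B i n = (rowsOf e B i ∩ Finset.range n).card :=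
    fun i hi n => sct_bridge hi n
  have hsq : sctN e B a q = 4 := by
    rw [hbridge a hea q, Finset.inter_eq_left.mpr
      (hSsub.trans (Finset.range_subset_range.mpr (by omega))), hS4]
  have htq : sctN e B (a - 1) q = 3 := by
    rw [hbridge (a - 1) hea1 q, Finset.inter_eq_left.mpr
      (hTsub.trans (Finset.range_subset_range.mpr (by omega))), hT3]
  have hfold := fold_main (B := B) (e := e) ha1 q
  have heps : epsB e B a = PN e B a q + 1 := by
    unfold epsB normalList
    rw [signState_eq_foldmap he2 ha1 hae q hq]
    omega
  rw [heps]
  have hPN : 1 ≤ PN e B a q ↔ ∃ m ∈ Finset.range (q + 1),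
      1 ≤ sctN e B (a - 1) m - sctN e B a m := by
    unfold PN
    exact Finset.le_sup_iff (by simp)
  constructor
  · intro h
    obtain ⟨m, _, hm1⟩ := hPN.mp (by omega)
    have hm2 : sctN e B a m < sctN e B (a - 1) m := by omega
    rw [hbridge a hea m, hbridge (a - 1) hea1 m] at hm2
    refine ⟨m, ?_, hm2⟩
    by_contra hm8
    push_neg at hm8
    rw [Finset.inter_eq_left.mpr (hSsub.trans (Finset.range_subset_range.mpr (by omega))),
      Finset.inter_eq_left.mpr (hTsub.trans (Finset.range_subset_range.mpr (by omega))),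
      hS4, hT3] at hm2
    omega
  · rintro ⟨m, hm8, hm⟩
    have h1 : 1 ≤ PN e B a q := by
      apply hPN.mpr
      refine ⟨m, Finset.mem_range.mpr (by omega), ?_⟩
      rw [hbridge a hea m, hbridge (a - 1) hea1 m]
      omega
    omega

set_option maxRecDepth 40000 in
lemma enum4 : ∀ M ∈ (Finset.range 7).powerset, M.card = 4 → rowWt M ≤ 3 →
    M = {0,1,2,3} ∨ M = {0,1,2,4} ∨ M = {0,1,2,5} ∨ M = {0,1,2,6} ∨
    M = {0,1,3,4} ∨ M = {0,1,3,5} ∨ M = {0,2,3,4} := by decide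

set_option maxRecDepth 40000 in
lemma enum3 : ∀ M ∈ (Finset.range 7).powerset, M.card = 3 → rowWt M ≤ 3 →
    M = {0,1,2} ∨ M = {0,1,3} ∨ M = {0,1,4} ∨ M = {0,1,5} ∨
    M = {0,2,3} ∨ M = {0,2,4} ∨ M = {1,2,3} := by decide

set_option maxRecDepth 40000 in
lemma z3 : ∀ M ∈ (Finset.range 7).powerset, M.card = 3 → rowWt M = 0 →
    M = oneRunnerBeta [] 3 := by decide

set_option maxRecDepth 40000 in
lemma z4 : ∀ M ∈ (Finset.range 7).powerset, M.card = 4 → rowWt M = 0 →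
    M = oneRunnerBeta [] 4 := by decide

set_option maxRecDepth 40000 in
lemma o3 : ∀ M ∈ (Finset.range 7).powerset, M.card = 3 → rowWt M = 1 →
    M = oneRunnerBeta [1] 3 := by decide

set_option maxRecDepth 40000 in
lemma o4 : ∀ M ∈ (Finset.range 7).powerset, M.card = 4 → rowWt M = 1 →
    M = oneRunnerBeta [1] 4 := by decide

lemma classify : ∀ S T : Finset ℕ,
    (S = {0,1,2,3} ∨ S = {0,1,2,4} ∨ S = {0,1,2,5} ∨ S = {0,1,2,6} ∨
     S = {0,1,3,4} ∨ S = {0,1,3,5} ∨ S = {0,2,3,4}) →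
    (T = {0,1,2} ∨ T = {0,1,3} ∨ T = {0,1,4} ∨ T = {0,1,5} ∨
     T = {0,2,3} ∨ T = {0,2,4} ∨ T = {1,2,3}) →
    rowWt S + rowWt T ≤ 3 →
    ((∃ m < 8, (S ∩ Finset.range m).card < (T ∩ Finset.range m).card) ↔
      (T = {0,1,2} ∧ (S = {0,1,3,4} ∨ S = {0,1,3,5} ∨ S = {0,2,3,4}))) := by
  rintro S T (rfl|rfl|rfl|rfl|rfl|rfl|rfl) (rfl|rfl|rfl|rfl|rfl|rfl|rfl) hw <;>
    revert hw <;> decide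

lemma sum_eq_one_aux {s : Finset ℕ} {f : ℕ → ℕ} (h : s.sum f = 1) :
    ∃ i ∈ s, f i = 1 ∧ ∀ j ∈ s, j ≠ i → f j = 0 := by
  have hne : s.sum f ≠ 0 := by rw [h]; omega
  obtain ⟨i, hi, hfi⟩ := Finset.exists_ne_zero_of_sum_ne_zero hne
  have h' : ∑ x ∈ s, f x = 1 := h
  have hsplit := Finset.add_sum_erase s f hi
  have hle : f i ≤ 1 := by
    rw [← h]; exact Finset.single_le_sum (fun _ _ => Nat.zero_le _) hi
  have hrest : ∑ x ∈ s.erase i, f x = 0 := by omega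
  refine ⟨i, hi, by omega, fun j hj hji => ?_⟩
  exact (Finset.sum_eq_zero_iff).mp hrest j (Finset.mem_erase.mpr ⟨hji, hj⟩)

lemma d1 : oneRunnerBeta [2,1] 4 = {0,1,3,5} := by decide
lemma d2 : oneRunnerBeta [1,1] 4 = {0,1,3,4} := by decide
lemma d3 : oneRunnerBeta [1,1,1] 4 = {0,2,3,4} := by decide
lemma d4 : oneRunnerBeta [] 3 = {0,1,2} := by decide
lemma w1 : rowWt {0,1,3,5} = 3 := by decide
lemma w2 : rowWt {0,1,3,4} = 2 := by decide
lemma w3 : rowWt {0,2,3,4} = 3 := by decide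
lemma w4 : rowWt {0,1,2} = 0 := by decide

/-- exceptional partitions for the `[3:1]`-pair formed by the block
`⟨3^a, 4^{b−a}, 3^{e−b}⟩` via the residue carried by runner `a`. -/
theorem stmt7 (e a b : ℕ) (he : 2 ≤ e) (ha : 0 < a) (hab : a < b) (hbe : b ≤ e)
    (bd : ℕ → ℕ) (hbd : bd = fun i => if i < a then 3 else if i < b then 4 else 3)
    (r : ℕ) (hr : r = (Finset.range e).sum bd)
    (lam : AbacusPartition) (hlam : inBlock e bd 3 lam)
    (B : Finset ℕ) (hB : B = lam.betaSet r) :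
    2 ≤ epsB e B a ↔
      (B = display e bd (fun m => if m = a then [2, 1] else []) ∨
       (∃ i, a < i ∧ i < e ∧
         B = display e bd (fun m => if m = a then [1, 1] else if m = i then [1] else [])) ∨
       (∃ i, i + 2 ≤ a ∧
         B = display e bd (fun m => if m = a then [1, 1] else if m = i then [1] else [])) ∨
       B = display e bd (fun m => if m = a then [1, 1, 1] else [])) := by
  have hae : a < e := lt_of_lt_of_le hab hbe
  have he0 : 0 < e := by omega
  have ha1 : 1 ≤ a := ha
  have hae1 : a - 1 < e := by omega
  have hbda : bd a = 4 := by rw [hbd]; simp only; rw [if_neg (lt_irrefl a), if_pos hab]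
  have hbda1 : bd (a - 1) = 3 := by rw [hbd]; simp only; rw [if_pos (by omega)]
  have hbd34 : ∀ i, bd i = 3 ∨ bd i = 4 := by
    intro i; rw [hbd]; simp only; split_ifs <;> simp
  obtain ⟨-, hcnt, hwt⟩ := hlam
  rw [← hr] at hcnt hwt
  rw [← hB] at hcnt hwt
  have hcard : ∀ i, i < e → (rowsOf e B i).card = bd i := by
    intro i hi
    rw [← runnerCount_eq hi, hcnt i hi]
  have hrowsum : ∑ i ∈ Finset.range e, rowWt (rowsOf e B i) = 3 := by
    rw [← hwt, abacusWeight_eq he0]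
    exact Finset.sum_congr rfl (fun i hi => (runnerWeight_eq (Finset.mem_range.mp hi)).symm)
  have hwle : ∀ i, i < e → rowWt (rowsOf e B i) ≤ 3 := by
    intro i hi
    rw [← hrowsum]
    exact Finset.single_le_sum (f := fun i => rowWt (rowsOf e B i))
      (fun _ _ => Nat.zero_le _) (Finset.mem_range.mpr hi)
  have hsub : ∀ i, i < e → rowsOf e B i ⊆ Finset.range 7 := by
    intro i hi x hx
    have h1 := rowWt_lt_bound hx
    have h2 := hwle i hi
    have h3 := hcard i hi
    have h4 := hbd34 i
    simp only [Finset.mem_range]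
    omega
  have hS4 : (rowsOf e B a).card = 4 := by rw [hcard a hae, hbda]
  have hT3 : (rowsOf e B (a - 1)).card = 3 := by rw [hcard _ hae1, hbda1]
  have central := eps_char (B := B) he ha1 hae hS4 hT3 (hsub a hae) (hsub _ hae1)
  have hpair : rowWt (rowsOf e B a) + rowWt (rowsOf e B (a - 1)) ≤ 3 := by
    have hsubper : ({a - 1, a} : Finset ℕ) ⊆ Finset.range e := by
      intro x hx
      simp only [Finset.mem_insert, Finset.mem_singleton] at hx
      rcases hx with rfl | rfl <;> simp only [Finset.mem_range] <;> omega
    have hmono := Finset.sum_le_sum_of_subset (f := fun i => rowWt (rowsOf e B i)) hsubper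
    rw [Finset.sum_pair (by omega : a - 1 ≠ a)] at hmono
    have hmono' : rowWt (rowsOf e B (a - 1)) + rowWt (rowsOf e B a)
        ≤ ∑ i ∈ Finset.range e, rowWt (rowsOf e B i) := hmono
    omega
  have hclass := classify (rowsOf e B a) (rowsOf e B (a - 1))
    (enum4 _ (Finset.mem_powerset.mpr (hsub a hae)) hS4 (hwle a hae))
    (enum3 _ (Finset.mem_powerset.mpr (hsub _ hae1)) hT3 (hwle _ hae1))
    (by omega)
  rw [central, hclass]
  clear central hclass hcnt hwt
  constructor
  · rintro ⟨hT, (hS | hS | hS)⟩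
    · -- S = {0,1,3,4} : weight 2, one extra runner of weight 1
      have hwS : rowWt (rowsOf e B a) = 2 := by rw [hS]; exact w2
      have hain : a ∈ Finset.range e := Finset.mem_range.mpr hae
      have hsplit : rowWt (rowsOf e B a)
          + ∑ x ∈ (Finset.range e).erase a, rowWt (rowsOf e B x)
          = ∑ x ∈ Finset.range e, rowWt (rowsOf e B x) :=
        Finset.add_sum_erase (Finset.range e) (fun i => rowWt (rowsOf e B i)) hain
      have hrest : ∑ x ∈ (Finset.range e).erase a, rowWt (rowsOf e B x) = 1 := by omega
      obtain ⟨i0, hi0mem, hi0w, hi0z⟩ := sum_eq_one_aux hrest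
      have hi0w' : rowWt (rowsOf e B i0) = 1 := hi0w
      have hi0e : i0 ≠ a ∧ i0 < e := by
        simpa [Finset.mem_erase, Finset.mem_range] using hi0mem
      have hi0a1 : i0 ≠ a - 1 := by
        intro hc
        rw [hc, hT, w4] at hi0w'
        exact absurd hi0w' (by omega)
      have hzero' : ∀ j, j < e → j ≠ a → j ≠ i0 → rowWt (rowsOf e B j) = 0 := by
        intro j hj hja hji
        exact hi0z j (Finset.mem_erase.mpr ⟨hja, Finset.mem_range.mpr hj⟩) hji
      have hdisp : B = display e bd
          (fun m => if m = a then [1, 1] else if m = i0 then [1] else []) := by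
        apply eq_display_of_rows he0
        intro i hi
        by_cases hia : i = a
        · have hgoal : rowsOf e B i = oneRunnerBeta [1, 1] (bd i) := by
            rw [hia, hS, hbda]; exact d2.symm
          simpa [hia] using hgoal
        · by_cases hii : i = i0
          · have hgoal : rowsOf e B i = oneRunnerBeta [1] (bd i) := by
              rcases hbd34 i with h3 | h4
              · rw [h3]
                exact o3 _ (Finset.mem_powerset.mpr (hsub i hi)) (by rw [hcard i hi, h3])
                  (by rw [hii]; exact hi0w')
              · rw [h4]
                exact o4 _ (Finset.mem_powerset.mpr (hsub i hi)) (by rw [hcard i hi, h4])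
                  (by rw [hii]; exact hi0w')
            simpa [hii, hi0e.1] using hgoal
          · have hgoal : rowsOf e B i = oneRunnerBeta [] (bd i) := by
              rcases hbd34 i with h3 | h4
              · rw [h3]
                exact z3 _ (Finset.mem_powerset.mpr (hsub i hi)) (by rw [hcard i hi, h3])
                  (hzero' i hi hia hii)
              · rw [h4]
                exact z4 _ (Finset.mem_powerset.mpr (hsub i hi)) (by rw [hcard i hi, h4])
                  (hzero' i hi hia hii)
            simpa [hia, hii] using hgoal
      rcases Nat.lt_or_ge a i0 with hlt | hge
      · exact Or.inr (Or.inl ⟨i0, hlt, hi0e.2, hdisp⟩)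
      · have hne := hi0e.1
        have hi02 : i0 + 2 ≤ a := by omega
        exact Or.inr (Or.inr (Or.inl ⟨i0, hi02, hdisp⟩))
    · -- S = {0,1,3,5} : weight 3, all others zero
      have hwS : rowWt (rowsOf e B a) = 3 := by rw [hS]; exact w1
      have hsplit : rowWt (rowsOf e B a)
          + ∑ x ∈ (Finset.range e).erase a, rowWt (rowsOf e B x)
          = ∑ x ∈ Finset.range e, rowWt (rowsOf e B x) :=
        Finset.add_sum_erase (Finset.range e) (fun i => rowWt (rowsOf e B i)) (Finset.mem_range.mpr hae)
      have hrest : ∑ x ∈ (Finset.range e).erase a, rowWt (rowsOf e B x) = 0 := by omega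
      have hzero' : ∀ j, j < e → j ≠ a → rowWt (rowsOf e B j) = 0 := by
        intro j hj hja
        exact (Finset.sum_eq_zero_iff).mp hrest j
          (Finset.mem_erase.mpr ⟨hja, Finset.mem_range.mpr hj⟩)
      refine Or.inl ?_
      apply eq_display_of_rows he0
      intro i hi
      by_cases hia : i = a
      · have hgoal : rowsOf e B i = oneRunnerBeta [2, 1] (bd i) := by
          rw [hia, hS, hbda]; exact d1.symm
        simpa [hia] using hgoal
      · have hgoal : rowsOf e B i = oneRunnerBeta [] (bd i) := by
          rcases hbd34 i with h3 | h4
          · rw [h3]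
            exact z3 _ (Finset.mem_powerset.mpr (hsub i hi)) (by rw [hcard i hi, h3])
              (hzero' i hi hia)
          · rw [h4]
            exact z4 _ (Finset.mem_powerset.mpr (hsub i hi)) (by rw [hcard i hi, h4])
              (hzero' i hi hia)
        simpa [hia] using hgoal
    · -- S = {0,2,3,4} : weight 3, all others zero
      have hwS : rowWt (rowsOf e B a) = 3 := by rw [hS]; exact w3
      have hsplit : rowWt (rowsOf e B a)
          + ∑ x ∈ (Finset.range e).erase a, rowWt (rowsOf e B x)
          = ∑ x ∈ Finset.range e, rowWt (rowsOf e B x) :=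
        Finset.add_sum_erase (Finset.range e) (fun i => rowWt (rowsOf e B i)) (Finset.mem_range.mpr hae)
      have hrest : ∑ x ∈ (Finset.range e).erase a, rowWt (rowsOf e B x) = 0 := by omega
      have hzero' : ∀ j, j < e → j ≠ a → rowWt (rowsOf e B j) = 0 := by
        intro j hj hja
        exact (Finset.sum_eq_zero_iff).mp hrest j
          (Finset.mem_erase.mpr ⟨hja, Finset.mem_range.mpr hj⟩)
      refine Or.inr (Or.inr (Or.inr ?_))
      apply eq_display_of_rows he0
      intro i hi
      by_cases hia : i = a
      · have hgoal : rowsOf e B i = oneRunnerBeta [1, 1, 1] (bd i) := by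
          rw [hia, hS, hbda]; exact d3.symm
        simpa [hia] using hgoal
      · have hgoal : rowsOf e B i = oneRunnerBeta [] (bd i) := by
          rcases hbd34 i with h3 | h4
          · rw [h3]
            exact z3 _ (Finset.mem_powerset.mpr (hsub i hi)) (by rw [hcard i hi, h3])
              (hzero' i hi hia)
          · rw [h4]
            exact z4 _ (Finset.mem_powerset.mpr (hsub i hi)) (by rw [hcard i hi, h4])
              (hzero' i hi hia)
        simpa [hia] using hgoal
  · rintro (hd | ⟨i0, hai, hie, hd⟩ | ⟨i0, hia2, hd⟩ | hd)
    · constructor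
      · rw [hd, rowsOf_display hae1, hbda1]
        simpa [show ¬ (a - 1 = a) by omega] using d4
      · refine Or.inr (Or.inl ?_)
        rw [hd, rowsOf_display hae, hbda]
        simpa using d1
    · constructor
      · rw [hd, rowsOf_display hae1, hbda1]
        simpa [show ¬ (a - 1 = a) by omega, show ¬ (a - 1 = i0) by omega] using d4
      · refine Or.inl ?_
        rw [hd, rowsOf_display hae, hbda]
        simpa using d2
    · constructor
      · rw [hd, rowsOf_display hae1, hbda1]
        simpa [show ¬ (a - 1 = a) by omega, show ¬ (a - 1 = i0) by omega] using d4
      · refine Or.inl ?_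
        rw [hd, rowsOf_display hae, hbda]
        simpa using d2
    · constructor
      · rw [hd, rowsOf_display hae1, hbda1]
        simpa [show ¬ (a - 1 = a) by omega] using d4
      · refine Or.inr (Or.inr ?_)
        rw [hd, rowsOf_display hae, hbda]
        simpa using d3
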